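/- Let J, K ⊂ ℝ be compact intervals, c an endpoint of J, and f ∈ C^∞(J) pliable at c. If d : K → J is a C^∞ diffeomorphism, then f ∘ d ∈ C^∞(K) is pliable at d^{−1}(c). -/

import Mathlib

open Set Filter Topology

noncomputable section

/-- The `C^r` norm `‖f‖_{C^r(J)} = ∑_{i=0}^{r} max_J |f^{(i)}|` of a function on a set
`J ⊆ ℝ` (derivatives taken within `J`). -/
def CrNorm (r : ℕ) (f : ℝ → ℝ) (J : Set ℝ) : ℝ :=
  ∑ i ∈ Finset.range (r + 1), ⨆ x : J, |iteratedDerivWithin i f J (x : ℝ)|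

/-- The support of `g` relative to the interval `[a,b]`: the closure of the set of points
of `[a,b]` where `g` is nonzero. -/
def suppOn (a b : ℝ) (g : ℝ → ℝ) : Set ℝ :=
  closure {x | x ∈ Set.Icc a b ∧ g x ≠ 0}

/-- The data `(k₀, cs, g)` is a series witnessing that `f` is pliable at the endpoint `c`
of the interval `[a,b]`:
* `f = Σ_{k ≥ k₀} cs k • g k` pointwise on `[a,b]`;
* the `cs k` are positive and super-exponentially converge to `0`;
* the `g k` are `C^∞` on `[a,b]`, their supports form a locally finite family of compact
  subsets of `[a,b] ∖ {c}`, and for every `r` the `C^r` norms of `g k` grow at most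
  exponentially in `k`;
* there is `L > 0` such that whenever `0 < 2ε < b - a`, the set `J_ε` of indices `k ≥ k₀`
  whose support meets `{x ∈ [a,b] : ε ≤ |x - c| ≤ 2ε}` has at most `L` elements, and
  `2^{-kL} ≤ ε` for every `k ∈ J_ε`. -/
structure IsPliableSeries (a b c : ℝ) (f : ℝ → ℝ) (k₀ : ℤ) (cs : ℤ → ℝ)
    (g : ℤ → ℝ → ℝ) : Prop where
  sum_eq : ∀ x ∈ Set.Icc a b,
    HasSum (fun k : {k : ℤ // k₀ ≤ k} => cs k.val * g k.val x) (f x)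
  cs_pos : ∀ k : ℤ, k₀ ≤ k → 0 < cs k
  cs_superexp : ∀ γ : ℝ,
    Tendsto (fun k : ℤ => (2 : ℝ) ^ (γ * (k : ℝ)) * cs k) atTop (𝓝 0)
  g_smooth : ∀ k : ℤ, k₀ ≤ k → ContDiffOn ℝ (⊤ : ℕ∞) (g k) (Set.Icc a b)
  supp_compact : ∀ k : ℤ, k₀ ≤ k → IsCompact (suppOn a b (g k))
  supp_subset : ∀ k : ℤ, k₀ ≤ k → suppOn a b (g k) ⊆ Set.Icc a b \ {c}
  supp_locFin : ∀ x ∈ Set.Icc a b \ {c}, ∃ U ∈ 𝓝 x,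
    {k : ℤ | k₀ ≤ k ∧ (suppOn a b (g k) ∩ U).Nonempty}.Finite
  norm_growth : ∀ r : ℕ, ∃ γ M : ℝ, ∀ k : ℤ, k₀ ≤ k →
    (2 : ℝ) ^ (γ * (k : ℝ)) * CrNorm r (g k) (Set.Icc a b) ≤ M
  index_bound : ∃ L : ℕ, 0 < L ∧ ∀ ε : ℝ, 0 < ε → 2 * ε < b - a →
    {k : ℤ | k₀ ≤ k ∧ (suppOn a b (g k) ∩
      {x ∈ Set.Icc a b | ε ≤ |x - c| ∧ |x - c| ≤ 2 * ε}).Nonempty}.Finite ∧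
    {k : ℤ | k₀ ≤ k ∧ (suppOn a b (g k) ∩
      {x ∈ Set.Icc a b | ε ≤ |x - c| ∧ |x - c| ≤ 2 * ε}).Nonempty}.ncard ≤ L ∧
    ∀ k : ℤ, k₀ ≤ k →
      (suppOn a b (g k) ∩ {x ∈ Set.Icc a b | ε ≤ |x - c| ∧ |x - c| ≤ 2 * ε}).Nonempty →
      (2 : ℝ) ^ (-(k : ℝ) * (L : ℝ)) ≤ ε

/-- `f` is pliable at the endpoint `c` of `[a,b]`. -/
def Pliable (a b c : ℝ) (f : ℝ → ℝ) : Prop :=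
  ∃ (k₀ : ℤ) (cs : ℤ → ℝ) (g : ℤ → ℝ → ℝ), IsPliableSeries a b c f k₀ cs g

lemma aux_lip {u v : ℝ} (huv : u < v) {f : ℝ → ℝ} (hf : ContDiffOn ℝ (⊤:ℕ∞) f (Set.Icc u v)) :
    ∃ Λ : ℝ, 0 ≤ Λ ∧ ∀ x ∈ Set.Icc u v, ∀ y ∈ Set.Icc u v, |f x - f y| ≤ Λ * |x - y| := by
  have hu : UniqueDiffOn ℝ (Set.Icc u v) := uniqueDiffOn_Icc huv
  have hc : ContinuousOn (derivWithin f (Set.Icc u v)) (Set.Icc u v) :=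
    hf.continuousOn_derivWithin hu (by exact_mod_cast le_top)
  obtain ⟨C, hC⟩ := isCompact_Icc.exists_bound_of_continuousOn hc
  refine ⟨max C 0, le_max_right _ _, fun x hx y hy => ?_⟩
  have h := (convex_Icc u v).norm_image_sub_le_of_norm_derivWithin_le (C := max C 0)
    (hf.differentiableOn (by simp))
    (fun z hz => (hC z hz).trans (le_max_left _ _)) hy hx
  simpa [Real.norm_eq_abs] using h

lemma aux_suppOn_eq {a b a' b' : ℝ} (gk d e : ℝ → ℝ)
    (hec : ContinuousOn e (Set.Icc a b))
    (hde : ∀ x ∈ Set.Icc a' b', d x ∈ Set.Icc a b ∧ e (d x) = x)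
    (hed : ∀ y ∈ Set.Icc a b, e y ∈ Set.Icc a' b' ∧ d (e y) = y) :
    suppOn a' b' (fun x => gk (d x)) = e '' suppOn a b gk := by
  have hset : {x | x ∈ Set.Icc a' b' ∧ gk (d x) ≠ 0}
      = e '' {y | y ∈ Set.Icc a b ∧ gk y ≠ 0} := by
    ext x
    constructor
    · rintro ⟨hx, hgx⟩
      exact ⟨d x, ⟨(hde x hx).1, hgx⟩, (hde x hx).2⟩
    · rintro ⟨y, ⟨hy, hgy⟩, rfl⟩
      exact ⟨(hed y hy).1, by rw [(hed y hy).2]; exact hgy⟩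
  have hclT : closure {y | y ∈ Set.Icc a b ∧ gk y ≠ 0} ⊆ Set.Icc a b :=
    closure_minimal (fun y hy => hy.1) isClosed_Icc
  have hcomp : IsCompact (closure {y | y ∈ Set.Icc a b ∧ gk y ≠ 0}) :=
    isCompact_Icc.of_isClosed_subset isClosed_closure hclT
  rw [suppOn, hset, suppOn, ← image_closure_of_isCompact hcomp (hec.mono hclT)]

lemma aux_finite {supp : ℤ → Set ℝ} {P : ℤ → Prop} {F : Set ℝ} (hF : IsCompact F)
    (hloc : ∀ x ∈ F, ∃ U ∈ 𝓝 x, {k | P k ∧ (supp k ∩ U).Nonempty}.Finite) :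
    {k | P k ∧ (supp k ∩ F).Nonempty}.Finite := by
  choose U hU hfin using hloc
  obtain ⟨t, ht⟩ := hF.elim_nhds_subcover' (fun x hx => U x hx) (fun x hx => hU x hx)
  refine (Set.Finite.biUnion t.finite_toSet (fun y _ => hfin y y.2)).subset ?_
  rintro k ⟨hP, z, hz1, hz2⟩
  have h := ht hz2
  simp only [Set.mem_iUnion] at h
  obtain ⟨y, hy, hzU⟩ := h
  exact Set.mem_biUnion hy ⟨hP, z, hz1, hzU⟩

lemma aux_ncard_biUnion (T : ℕ → Set ℤ) (L : ℕ)
    (h : ∀ i, (T i).ncard ≤ L) :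
    ∀ m : ℕ, (⋃ i ∈ Finset.range m, T i).ncard ≤ m * L := by
  intro m
  induction m with
  | zero => simp
  | succ n ih =>
    rw [Finset.range_add_one, Finset.set_biUnion_insert]
    calc (T n ∪ ⋃ i ∈ Finset.range n, T i).ncard
        ≤ (T n).ncard + (⋃ i ∈ Finset.range n, T i).ncard := Set.ncard_union_le _ _
      _ ≤ L + n * L := add_le_add (h n) ih
      _ = (n + 1) * L := by ring

lemma crNorm_nonneg (r : ℕ) (f : ℝ → ℝ) (J : Set ℝ) : 0 ≤ CrNorm r f J :=
  Finset.sum_nonneg fun _ _ => Real.iSup_nonneg fun _ => abs_nonneg _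

lemma le_crNorm {r i : ℕ} (hi : i ≤ r) {u v : ℝ} (huv : u < v) {f : ℝ → ℝ}
    (hf : ContDiffOn ℝ (⊤:ℕ∞) f (Set.Icc u v)) {x : ℝ} (hx : x ∈ Set.Icc u v) :
    |iteratedDerivWithin i f (Set.Icc u v) x| ≤ CrNorm r f (Set.Icc u v) := by
  have hcont : ContinuousOn (fun z => |iteratedDerivWithin i f (Set.Icc u v) z|) (Set.Icc u v) :=
    (hf.continuousOn_iteratedDerivWithin (by exact_mod_cast le_top) (uniqueDiffOn_Icc huv)).abs
  have hbdd : BddAbove (Set.range fun z : Set.Icc u v =>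
      |iteratedDerivWithin i f (Set.Icc u v) (z : ℝ)|) := by
    have h := (isCompact_Icc.image_of_continuousOn hcont).bddAbove
    rwa [Set.image_eq_range] at h
  have h1 : |iteratedDerivWithin i f (Set.Icc u v) x|
      ≤ ⨆ z : Set.Icc u v, |iteratedDerivWithin i f (Set.Icc u v) (z : ℝ)| :=
    le_ciSup hbdd (⟨x, hx⟩ : Set.Icc u v)
  refine h1.trans ?_
  exact Finset.single_le_sum (f := fun j => ⨆ z : Set.Icc u v,
      |iteratedDerivWithin j f (Set.Icc u v) (z : ℝ)|)
    (fun j _ => Real.iSup_nonneg fun _ => abs_nonneg _)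
    (Finset.mem_range.2 (Nat.lt_succ_of_le hi))

lemma crNorm_comp_le {r : ℕ} {gk d : ℝ → ℝ} {a b a' b' : ℝ} (hab : a < b) (hab' : a' < b')
    (hg : ContDiffOn ℝ (⊤:ℕ∞) gk (Set.Icc a b)) (hd : ContDiffOn ℝ (⊤:ℕ∞) d (Set.Icc a' b'))
    (hmap : ∀ x ∈ Set.Icc a' b', d x ∈ Set.Icc a b) {D : ℝ} (hD1 : 1 ≤ D)
    (hDb : ∀ i : ℕ, 1 ≤ i → i ≤ r → ∀ x ∈ Set.Icc a' b',
      ‖iteratedFDerivWithin ℝ i d (Set.Icc a' b') x‖ ≤ D ^ i) :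
    CrNorm r (fun x => gk (d x)) (Set.Icc a' b') ≤
      (r + 1) * (r.factorial * (CrNorm r gk (Set.Icc a b) * D ^ r)) := by
  have hD0 : (0:ℝ) < D := lt_of_lt_of_le one_pos hD1
  have hC0 : 0 ≤ CrNorm r gk (Set.Icc a b) := crNorm_nonneg _ _ _
  set A : ℝ := r.factorial * (CrNorm r gk (Set.Icc a b) * D ^ r) with hA
  have key : ∀ i, i ≤ r → ∀ x ∈ Set.Icc a' b',
      |iteratedDerivWithin i (fun x => gk (d x)) (Set.Icc a' b') x| ≤ A := by
    intro i hi x hx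
    have h1 : ‖iteratedFDerivWithin ℝ i (gk ∘ d) (Set.Icc a' b') x‖
        ≤ i.factorial * CrNorm r gk (Set.Icc a b) * D ^ i := by
      apply norm_iteratedFDerivWithin_comp_le (N := ((⊤:ℕ∞) : WithTop ℕ∞)) hg hd
        (by exact_mod_cast le_top) (uniqueDiffOn_Icc hab) (uniqueDiffOn_Icc hab') hmap hx
      · intro j hj
        rw [norm_iteratedFDerivWithin_eq_norm_iteratedDerivWithin, Real.norm_eq_abs]
        exact le_crNorm (hj.trans hi) hab hg (hmap x hx)
      · intro j hj1 hj2
        exact hDb j hj1 (hj2.trans hi) x hx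
    have h2 : |iteratedDerivWithin i (fun x => gk (d x)) (Set.Icc a' b') x|
        = ‖iteratedFDerivWithin ℝ i (gk ∘ d) (Set.Icc a' b') x‖ := by
      rw [norm_iteratedFDerivWithin_eq_norm_iteratedDerivWithin, Real.norm_eq_abs]
      rfl
    rw [h2]
    refine h1.trans ?_
    have hf : (i.factorial : ℝ) ≤ r.factorial := by exact_mod_cast Nat.factorial_le hi
    have hpow : D ^ i ≤ D ^ r := pow_le_pow_right₀ hD1 hi
    calc (i.factorial : ℝ) * CrNorm r gk (Set.Icc a b) * D ^ i
        ≤ (r.factorial : ℝ) * CrNorm r gk (Set.Icc a b) * D ^ r := by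
          apply mul_le_mul (mul_le_mul hf le_rfl hC0 (by positivity)) hpow (by positivity)
            (by positivity)
      _ = A := by rw [hA]; ring
  have hne : Nonempty ↥(Set.Icc a' b') := ⟨⟨a', Set.left_mem_Icc.2 hab'.le⟩⟩
  have hsum : ∀ i ∈ Finset.range (r + 1),
      (⨆ x : Set.Icc a' b', |iteratedDerivWithin i (fun x => gk (d x)) (Set.Icc a' b') (x : ℝ)|)
        ≤ A := by
    intro i hi
    exact ciSup_le fun x => key i (Nat.lt_succ_iff.1 (Finset.mem_range.1 hi)) x x.2
  calc CrNorm r (fun x => gk (d x)) (Set.Icc a' b') ≤ ∑ _i ∈ Finset.range (r + 1), A :=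
        Finset.sum_le_sum hsum
    _ = (r + 1) * A := by rw [Finset.sum_const, Finset.card_range, nsmul_eq_mul]; push_cast; ring


set_option maxHeartbeats 2000000 in
/-- Lemma 4.1(e) of the paper. If `f` is pliable at the endpoint `c` of
`J = [a,b]` and `d : K = [a',b'] → J` is a `C^∞` diffeomorphism (with `C^∞` inverse
`e`), then `f ∘ d` is pliable at `d⁻¹ c = e c`. -/
theorem stmt13 (a b c a' b' : ℝ) (hab : a < b) (ha'b' : a' < b') (hc : c = a ∨ c = b)
    (f : ℝ → ℝ) (hfsm : ContDiffOn ℝ (⊤ : ℕ∞) f (Set.Icc a b))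
    (hfpl : Pliable a b c f)
    (d e : ℝ → ℝ)
    (hdsm : ContDiffOn ℝ (⊤ : ℕ∞) d (Set.Icc a' b'))
    (hesm : ContDiffOn ℝ (⊤ : ℕ∞) e (Set.Icc a b))
    (hde : ∀ x ∈ Set.Icc a' b', d x ∈ Set.Icc a b ∧ e (d x) = x)
    (hed : ∀ y ∈ Set.Icc a b, e y ∈ Set.Icc a' b' ∧ d (e y) = y) :
    Pliable a' b' (e c) (fun x => f (d x)) := by
  classical
  obtain ⟨k₀, cs, g, H⟩ := hfpl
  have hcJ : c ∈ Set.Icc a b := by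
    rcases hc with rfl | rfl
    · exact Set.left_mem_Icc.2 hab.le
    · exact Set.right_mem_Icc.2 hab.le
  have hecK : e c ∈ Set.Icc a' b' := (hed c hcJ).1
  have hdec : d (e c) = c := (hed c hcJ).2
  -- Lipschitz constant
  obtain ⟨Λd, hΛd0, hΛd⟩ := aux_lip ha'b' hdsm
  obtain ⟨Λe, hΛe0, hΛe⟩ := aux_lip hab hesm
  set Λ : ℝ := max 1 (max Λd Λe) with hΛdef
  have hΛ1 : 1 ≤ Λ := le_max_left _ _
  have hΛ0 : 0 < Λ := lt_of_lt_of_le one_pos hΛ1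
  have hlipd : ∀ x ∈ Set.Icc a' b', ∀ y ∈ Set.Icc a' b', |d x - d y| ≤ Λ * |x - y| := by
    intro x hx y hy
    exact (hΛd x hx y hy).trans (mul_le_mul_of_nonneg_right
      ((le_max_left Λd Λe).trans (le_max_right _ _)) (abs_nonneg _))
  have hlipe : ∀ x ∈ Set.Icc a b, ∀ y ∈ Set.Icc a b, |e x - e y| ≤ Λ * |x - y| := by
    intro x hx y hy
    exact (hΛe x hx y hy).trans (mul_le_mul_of_nonneg_right
      ((le_max_right Λd Λe).trans (le_max_right _ _)) (abs_nonneg _))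
  -- support identity
  have hsupp : ∀ gk : ℝ → ℝ, suppOn a' b' (fun x => gk (d x)) = e '' suppOn a b gk :=
    fun gk => aux_suppOn_eq gk d e hesm.continuousOn hde hed
  have hsuppJ : ∀ j : ℤ, k₀ ≤ j → suppOn a b (g j) ⊆ Set.Icc a b :=
    fun j hj => (H.supp_subset j hj).trans diff_subset
  have einj : ∀ y ∈ Set.Icc a b, ∀ y' ∈ Set.Icc a b, e y = e y' → y = y' := by
    intro y hy y' hy' h
    rw [← (hed y hy).2, ← (hed y' hy').2, h]
  -- index bound data
  obtain ⟨L, hLpos, hL⟩ := H.index_bound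
  -- the far region and its finite index set
  set F : Set ℝ := {y | y ∈ Set.Icc a b ∧ (b - a) / 4 ≤ |y - c|} with hFdef
  have hFclosed : IsClosed F := by
    have : F = Set.Icc a b ∩ {y | (b - a) / 4 ≤ |y - c|} := rfl
    rw [this]
    exact isClosed_Icc.inter (isClosed_le continuous_const
      ((continuous_id.sub continuous_const).abs))
  have hFcomp : IsCompact F :=
    isCompact_Icc.of_isClosed_subset hFclosed (fun y hy => hy.1)
  have hFsub : F ⊆ Set.Icc a b \ {c} := by
    rintro y ⟨hy1, hy2⟩
    refine ⟨hy1, fun h => ?_⟩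
    rw [Set.mem_singleton_iff] at h
    rw [h] at hy2
    simp only [sub_self, abs_zero] at hy2
    linarith
  set S : Set ℤ := {j | k₀ ≤ j ∧ (suppOn a b (g j) ∩ F).Nonempty} with hSdef
  have hSfin : S.Finite := aux_finite hFcomp (fun x hx => H.supp_locFin x (hFsub hx))
  -- choice of the shift s
  obtain ⟨n₁, hn₁⟩ := pow_unbounded_of_one_lt (R := ℝ) (2 * Λ) one_lt_two
  obtain ⟨n₂, hn₂⟩ := pow_unbounded_of_one_lt (R := ℝ) (8 * Λ / (b - a)) one_lt_two
  set s : ℤ := max (1 - k₀) 0 + n₁ + n₂ with hsdef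
  have hs0 : 0 ≤ s := by
    have := le_max_right (1 - k₀) (0:ℤ)
    omega
  have hsk₀ : 1 ≤ k₀ + s := by
    have := le_max_left (1 - k₀) (0:ℤ)
    omega
  have hsn₁ : (n₁ : ℤ) ≤ s := by
    have := le_max_right (1 - k₀) (0:ℤ)
    omega
  have hsn₂ : (n₂ : ℤ) ≤ k₀ + s := by
    have := le_max_left (1 - k₀) (0:ℤ)
    omega
  have rpow_mono : ∀ {p q : ℝ}, p ≤ q → (2:ℝ) ^ p ≤ (2:ℝ) ^ q :=
    fun h => Real.rpow_le_rpow_of_exponent_le one_le_two h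
  have hpow_nat : ∀ n : ℕ, ((2:ℝ) ^ (n:ℝ)) = 2 ^ n := fun n => Real.rpow_natCast 2 n
  have h2s : 2 * Λ ≤ (2:ℝ) ^ (s:ℝ) := by
    refine hn₁.le.trans ?_
    rw [← hpow_nat n₁]
    exact rpow_mono (by exact_mod_cast hsn₁)
  have h2k₀s : 8 * Λ / (b - a) ≤ (2:ℝ) ^ ((k₀ + s : ℤ) : ℝ) := by
    refine hn₂.le.trans ?_
    rw [← hpow_nat n₂]
    exact rpow_mono (by exact_mod_cast hsn₂)
  -- the new series
  refine ⟨k₀ + s, fun k => cs (k - s), fun k x => g (k - s) (d x), ?_, ?_, ?_, ?_, ?_, ?_, ?_, ?_, ?_⟩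
  · -- sum_eq
    intro x hx
    have hdx : d x ∈ Set.Icc a b := (hde x hx).1
    have h := H.sum_eq (d x) hdx
    exact (Equiv.hasSum_iff
      (⟨fun k => ⟨k.1 - s, by omega⟩, fun j => ⟨j.1 + s, by omega⟩,
        fun k => by ext; simp, fun j => by ext; simp⟩ :
        {k : ℤ // k₀ + s ≤ k} ≃ {j : ℤ // k₀ ≤ j})).2 h
  · -- cs_pos
    intro k hk
    exact H.cs_pos _ (by omega)
  · -- cs_superexp
    intro γ
    have h2 : Tendsto (fun k : ℤ => k - s) atTop atTop :=
      tendsto_atTop_add_const_right atTop (-s) tendsto_id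
    have h3 := (H.cs_superexp γ).comp h2
    have h4 := h3.const_mul ((2:ℝ) ^ (γ * (s:ℝ)))
    rw [mul_zero] at h4
    refine h4.congr fun k => ?_
    show (2:ℝ) ^ (γ * (s:ℝ)) * ((2:ℝ) ^ (γ * ((k - s : ℤ) : ℝ)) * cs (k - s))
        = (2:ℝ) ^ (γ * (k:ℝ)) * cs (k - s)
    rw [← mul_assoc, ← Real.rpow_add two_pos]
    congr 2
    push_cast
    ring
  · -- g_smooth
    intro k hk
    exact (H.g_smooth (k - s) (by omega)).comp hdsm (fun x hx => (hde x hx).1)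
  · -- supp_compact
    intro k hk
    rw [hsupp]
    exact ((H.supp_compact (k - s) (by omega)).image_of_continuousOn
      (hesm.continuousOn.mono (hsuppJ _ (by omega))))
  · -- supp_subset
    intro k hk
    rw [hsupp]
    rintro _ ⟨y, hy, rfl⟩
    have hy' := H.supp_subset _ (by omega : k₀ ≤ k - s) hy
    refine ⟨(hed y hy'.1).1, fun h => ?_⟩
    rw [Set.mem_singleton_iff] at h
    exact hy'.2 (einj y hy'.1 c hcJ h)
  · -- supp_locFin
    intro x hx
    have hxK : x ∈ Set.Icc a' b' := hx.1
    have hdx : d x ∈ Set.Icc a b := (hde x hxK).1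
    have hdxc : d x ≠ c := by
      intro h
      apply hx.2
      rw [Set.mem_singleton_iff, ← (hde x hxK).2, h]
    obtain ⟨V, hV, hVfin⟩ := H.supp_locFin (d x) ⟨hdx, hdxc⟩
    have hQcomp : IsCompact (e '' (Set.Icc a b \ interior V)) :=
      (isCompact_Icc.diff isOpen_interior).image_of_continuousOn
        (hesm.continuousOn.mono diff_subset)
    have hxQ : x ∉ e '' (Set.Icc a b \ interior V) := by
      rintro ⟨y, ⟨hy1, hy2⟩, hey⟩
      apply hy2
      have hyd : y = d x := by rw [← (hed y hy1).2, hey]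
      rw [hyd]
      exact mem_interior_iff_mem_nhds.2 hV
    refine ⟨(e '' (Set.Icc a b \ interior V))ᶜ,
      hQcomp.isClosed.isOpen_compl.mem_nhds hxQ, ?_⟩
    have hsub : {k : ℤ | k₀ + s ≤ k ∧
        (suppOn a' b' (fun x => g (k - s) (d x)) ∩ (e '' (Set.Icc a b \ interior V))ᶜ).Nonempty}
        ⊆ (fun j => j + s) '' {j : ℤ | k₀ ≤ j ∧ (suppOn a b (g j) ∩ V).Nonempty} := by
      rintro k ⟨hk, z, hz1, hz2⟩
      rw [hsupp] at hz1
      obtain ⟨y, hy, rfl⟩ := hz1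
      have hyI : y ∈ Set.Icc a b := hsuppJ _ (by omega) hy
      have hyV : y ∈ interior V := by
        by_contra h
        exact hz2 ⟨y, ⟨hyI, h⟩, rfl⟩
      exact ⟨k - s, ⟨by omega, y, hy, interior_subset hyV⟩, by ring⟩
    exact ((hVfin.image _).subset hsub)
  · -- norm_growth
    intro r
    obtain ⟨γ, M, hM⟩ := H.norm_growth r
    have hder : ∀ i : ℕ, ∃ C : ℝ, ∀ x ∈ Set.Icc a' b',
        ‖iteratedFDerivWithin ℝ i d (Set.Icc a' b') x‖ ≤ C := by
      intro i
      exact isCompact_Icc.exists_bound_of_continuousOn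
        (hdsm.continuousOn_iteratedFDerivWithin (by exact_mod_cast le_top)
          (uniqueDiffOn_Icc ha'b'))
    choose B hB using hder
    set D : ℝ := 1 + ∑ i ∈ Finset.range (r + 1), max (B i) 0 with hDdef
    have hsum0 : (0:ℝ) ≤ ∑ i ∈ Finset.range (r + 1), max (B i) 0 :=
      Finset.sum_nonneg fun _ _ => le_max_right _ _
    have hD1 : 1 ≤ D := by rw [hDdef]; linarith
    have hDb : ∀ i : ℕ, 1 ≤ i → i ≤ r → ∀ x ∈ Set.Icc a' b',
        ‖iteratedFDerivWithin ℝ i d (Set.Icc a' b') x‖ ≤ D ^ i := by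
      intro i h1 h2 x hx
      have h3 : max (B i) 0 ≤ ∑ j ∈ Finset.range (r + 1), max (B j) 0 :=
        Finset.single_le_sum (f := fun j => max (B j) 0)
          (fun j _ => le_max_right _ _) (Finset.mem_range.2 (by omega))
      have h4 : B i ≤ D := by
        have := le_max_left (B i) 0
        rw [hDdef]; linarith
      calc ‖iteratedFDerivWithin ℝ i d (Set.Icc a' b') x‖ ≤ B i := hB i x hx
        _ ≤ D := h4
        _ ≤ D ^ i := le_self_pow₀ hD1 (by omega)
    refine ⟨γ, (2:ℝ) ^ (γ * (s:ℝ)) * ((r + 1) * (r.factorial * (max M 0 * D ^ r))), ?_⟩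
    intro k hk
    have hj : k₀ ≤ k - s := by omega
    have hcomp := crNorm_comp_le hab ha'b' (H.g_smooth (k - s) hj) hdsm
      (fun x hx => (hde x hx).1) hD1 hDb
    have hMk : (2:ℝ) ^ (γ * ((k - s : ℤ) : ℝ)) * CrNorm r (g (k - s)) (Set.Icc a b) ≤ max M 0 :=
      (hM (k - s) hj).trans (le_max_left _ _)
    have hCnn : 0 ≤ CrNorm r (g (k - s)) (Set.Icc a b) := crNorm_nonneg _ _ _
    have e1 : (2:ℝ) ^ (γ * (k:ℝ)) = (2:ℝ) ^ (γ * (s:ℝ)) * (2:ℝ) ^ (γ * ((k - s : ℤ) : ℝ)) := by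
      rw [← Real.rpow_add two_pos]
      congr 1
      push_cast
      ring
    have hD0 : (0:ℝ) < D := lt_of_lt_of_le one_pos hD1
    calc (2:ℝ) ^ (γ * (k:ℝ)) * CrNorm r (fun x => g (k - s) (d x)) (Set.Icc a' b')
        ≤ (2:ℝ) ^ (γ * (k:ℝ)) *
          ((r + 1) * (r.factorial * (CrNorm r (g (k - s)) (Set.Icc a b) * D ^ r))) := by
          exact mul_le_mul_of_nonneg_left hcomp (Real.rpow_nonneg (by norm_num) _)
      _ = (2:ℝ) ^ (γ * (s:ℝ)) * ((r + 1) * (r.factorial *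
          (((2:ℝ) ^ (γ * ((k - s : ℤ) : ℝ)) * CrNorm r (g (k - s)) (Set.Icc a b)) * D ^ r))) := by
          rw [e1]; ring
      _ ≤ (2:ℝ) ^ (γ * (s:ℝ)) * ((r + 1) * (r.factorial * (max M 0 * D ^ r))) := by
          have hr0 : (0:ℝ) ≤ (2:ℝ) ^ (γ * (s:ℝ)) := Real.rpow_nonneg (by norm_num) _
          have hfac : (0:ℝ) ≤ (r.factorial : ℝ) := Nat.cast_nonneg _
          have hstep : ((2:ℝ) ^ (γ * ((k - s : ℤ) : ℝ)) * CrNorm r (g (k - s)) (Set.Icc a b))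
              * D ^ r ≤ max M 0 * D ^ r :=
            mul_le_mul_of_nonneg_right hMk (by positivity)
          have h1 : (r.factorial : ℝ) * (((2:ℝ) ^ (γ * ((k - s : ℤ) : ℝ)) *
              CrNorm r (g (k - s)) (Set.Icc a b)) * D ^ r)
              ≤ (r.factorial : ℝ) * (max M 0 * D ^ r) :=
            mul_le_mul_of_nonneg_left hstep hfac
          have h2 : ((r:ℝ) + 1) * ((r.factorial : ℝ) * (((2:ℝ) ^ (γ * ((k - s : ℤ) : ℝ)) *
              CrNorm r (g (k - s)) (Set.Icc a b)) * D ^ r))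
              ≤ ((r:ℝ) + 1) * ((r.factorial : ℝ) * (max M 0 * D ^ r)) :=
            mul_le_mul_of_nonneg_left h1 (by positivity)
          exact mul_le_mul_of_nonneg_left h2 hr0
  · -- index_bound
    set m : ℕ := ⌈Real.logb 2 (2 * Λ ^ 2)⌉₊ + 1 with hmdef
    have h2m : 2 * Λ ^ 2 < (2:ℝ) ^ (m:ℕ) := by
      have h1 : 2 * Λ ^ 2 = (2:ℝ) ^ (Real.logb 2 (2 * Λ ^ 2)) :=
        (Real.rpow_logb (by norm_num) (by norm_num) (by positivity)).symm
      rw [h1, ← hpow_nat m]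
      apply Real.rpow_lt_rpow_of_exponent_lt one_lt_two
      have h2 : Real.logb 2 (2 * Λ ^ 2) ≤ (⌈Real.logb 2 (2 * Λ ^ 2)⌉₊ : ℝ) := Nat.le_ceil _
      have h3 : ((m:ℕ):ℝ) = (⌈Real.logb 2 (2 * Λ ^ 2)⌉₊ : ℝ) + 1 := by
        rw [hmdef]; push_cast; ring
      rw [h3]
      linarith
    have hba : (0:ℝ) < b - a := by linarith
    refine ⟨m * L + S.ncard + 1, by omega, ?_⟩
    intro ε hε hε2
    set δ : ℕ → ℝ := fun i => ε / Λ * 2 ^ i with hδdef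
    have hδpos : ∀ i, 0 < δ i := by
      intro i
      rw [hδdef]
      positivity
    set T : ℕ → Set ℤ := fun i => {j : ℤ | k₀ ≤ j ∧ 2 * δ i < b - a ∧
      (suppOn a b (g j) ∩
        {x ∈ Set.Icc a b | δ i ≤ |x - c| ∧ |x - c| ≤ 2 * δ i}).Nonempty} with hTdef
    have hT : ∀ i, (T i).Finite ∧ (T i).ncard ≤ L ∧
        ∀ j ∈ T i, (2:ℝ) ^ (-(j:ℝ) * (L:ℝ)) ≤ δ i := by
      intro i
      by_cases hv : 2 * δ i < b - a
      · obtain ⟨hf, hcard, hexp⟩ := hL (δ i) (hδpos i) hv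
        have hsub : T i ⊆ {j : ℤ | k₀ ≤ j ∧ (suppOn a b (g j) ∩
            {x ∈ Set.Icc a b | δ i ≤ |x - c| ∧ |x - c| ≤ 2 * δ i}).Nonempty} :=
          fun j hj => ⟨hj.1, hj.2.2⟩
        exact ⟨hf.subset hsub, (Set.ncard_le_ncard hsub hf).trans hcard,
          fun j hj => hexp j hj.1 hj.2.2⟩
      · have hTe : T i = ∅ := by
          ext j
          simp only [hTdef, Set.mem_setOf_eq, Set.mem_empty_iff_false, iff_false, not_and]
          intro _ h
          exact absurd h hv
        rw [hTe]
        exact ⟨Set.finite_empty, by simp, by simp⟩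
    have hkey : ∀ k : ℤ, k₀ + s ≤ k →
        (suppOn a' b' (fun x => g (k - s) (d x)) ∩
          {x ∈ Set.Icc a' b' | ε ≤ |x - e c| ∧ |x - e c| ≤ 2 * ε}).Nonempty →
        ((k - s ∈ S ∧ (b - a) / (8 * Λ) ≤ ε) ∨ ∃ i < m, k - s ∈ T i ∧ δ i ≤ 2 * Λ * ε) := by
      rintro k hk ⟨z, hz1, hz2⟩
      rw [hsupp] at hz1
      obtain ⟨y, hy, rfl⟩ := hz1
      have hyJ : y ∈ Set.Icc a b := hsuppJ _ (by omega) hy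
      have heyK : e y ∈ Set.Icc a' b' := hz2.1
      have hey1 : ε ≤ |e y - e c| := hz2.2.1
      have hey2 : |e y - e c| ≤ 2 * ε := hz2.2.2
      have ht1 : ε / Λ ≤ |y - c| := by
        have h1 := hlipe y hyJ c hcJ
        rw [div_le_iff₀ hΛ0]
        calc ε ≤ |e y - e c| := hey1
          _ ≤ Λ * |y - c| := h1
          _ = |y - c| * Λ := mul_comm _ _
      have ht2 : |y - c| ≤ 2 * Λ * ε := by
        have h1 := hlipd (e y) heyK (e c) hecK
        rw [(hed y hyJ).2, hdec] at h1
        calc |y - c| ≤ Λ * |e y - e c| := h1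
          _ ≤ Λ * (2 * ε) := mul_le_mul_of_nonneg_left hey2 hΛ0.le
          _ = 2 * Λ * ε := by ring
      by_cases hcase : (b - a) / 4 ≤ |y - c|
      · left
        refine ⟨⟨by omega, ⟨y, hy, hyJ, hcase⟩⟩, ?_⟩
        rw [div_le_iff₀ (by positivity : (0:ℝ) < 8 * Λ)]
        have h2 : (b - a) / 4 ≤ 2 * Λ * ε := le_trans hcase ht2
        have h3 : Λ * ε = ε * Λ := mul_comm _ _
        linarith
      · push_neg at hcase
        have hP0 : δ 0 ≤ |y - c| := by
          have : δ 0 = ε / Λ := by rw [hδdef]; simp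
          rw [this]
          exact ht1
        have hPm : ¬ δ m ≤ |y - c| := by
          have h5 : ε / Λ * (2 * Λ ^ 2) = 2 * Λ * ε := by field_simp
          have h6 : 2 * Λ * ε < δ m := by
            rw [hδdef]
            calc 2 * Λ * ε = ε / Λ * (2 * Λ ^ 2) := h5.symm
              _ < ε / Λ * 2 ^ m := by
                  exact mul_lt_mul_of_pos_left h2m (div_pos hε hΛ0)
          intro hcon
          linarith
        set i := Nat.findGreatest (fun i => δ i ≤ |y - c|) m with hidef
        have hi1 : δ i ≤ |y - c| :=
          Nat.findGreatest_spec (P := fun i => δ i ≤ |y - c|) (Nat.zero_le m) hP0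
        have him : i < m := by
          rcases lt_or_eq_of_le (Nat.findGreatest_le m : i ≤ m) with h | h
          · exact h
          · exact absurd (h ▸ hi1) hPm
        have hi2 : ¬ δ (i + 1) ≤ |y - c| :=
          Nat.findGreatest_is_greatest (Nat.lt_succ_self i) him
        push_neg at hi2
        have hdd : δ (i + 1) = 2 * δ i := by
          rw [hδdef]
          simp only [pow_succ]
          ring
        rw [hdd] at hi2
        right
        exact ⟨i, him, ⟨by omega, by linarith, ⟨y, hy, ⟨hyJ, hi1, by linarith⟩⟩⟩, by linarith⟩
    have hCsub : {k : ℤ | k₀ + s ≤ k ∧ (suppOn a' b' (fun x => g (k - s) (d x)) ∩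
        {x ∈ Set.Icc a' b' | ε ≤ |x - e c| ∧ |x - e c| ≤ 2 * ε}).Nonempty}
        ⊆ (fun j => j + s) '' (S ∪ ⋃ i ∈ Finset.range m, T i) := by
      rintro k ⟨hk, hne⟩
      rcases hkey k hk hne with ⟨hS, -⟩ | ⟨i, him, hTi, -⟩
      · exact ⟨k - s, Or.inl hS, by ring⟩
      · exact ⟨k - s, Or.inr (Set.mem_biUnion (Finset.mem_range.2 him) hTi), by ring⟩
    have hUfin : (S ∪ ⋃ i ∈ Finset.range m, T i).Finite :=
      hSfin.union (Set.Finite.biUnion (Finset.range m).finite_toSet (fun i _ => (hT i).1))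
    have hL'L : L ≤ m * L + S.ncard + 1 := by
      have h1 : L ≤ m * L := Nat.le_mul_of_pos_left L (by omega)
      omega
    refine ⟨(hUfin.image _).subset hCsub, ?_, ?_⟩
    · calc {k : ℤ | k₀ + s ≤ k ∧ (suppOn a' b' (fun x => g (k - s) (d x)) ∩
            {x ∈ Set.Icc a' b' | ε ≤ |x - e c| ∧ |x - e c| ≤ 2 * ε}).Nonempty}.ncard
          ≤ ((fun j => j + s) '' (S ∪ ⋃ i ∈ Finset.range m, T i)).ncard :=
            Set.ncard_le_ncard hCsub (hUfin.image _)
        _ = (S ∪ ⋃ i ∈ Finset.range m, T i).ncard :=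
            Set.ncard_image_of_injective _ (add_left_injective s)
        _ ≤ S.ncard + (⋃ i ∈ Finset.range m, T i).ncard := Set.ncard_union_le _ _
        _ ≤ S.ncard + m * L :=
            Nat.add_le_add_left (aux_ncard_biUnion T L (fun i => (hT i).2.1) m) _
        _ ≤ m * L + S.ncard + 1 := by omega
    · intro k hk hne
      have hk1 : (1:ℤ) ≤ k := by omega
      have hkR : (1:ℝ) ≤ (k:ℝ) := by exact_mod_cast hk1
      rcases hkey k hk hne with ⟨-, hS⟩ | ⟨i, him, hTi, hδi⟩
      · have step1 : -(k:ℝ) * ((m * L + S.ncard + 1 : ℕ):ℝ) ≤ -((k₀ + s : ℤ):ℝ) := by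
          have hk' : ((k₀ + s : ℤ):ℝ) ≤ (k:ℝ) := by exact_mod_cast hk
          have hL'1 : (1:ℝ) ≤ ((m * L + S.ncard + 1 : ℕ):ℝ) := by
            exact_mod_cast (by omega : 1 ≤ m * L + S.ncard + 1)
          have h0k : (0:ℝ) ≤ (k:ℝ) := by linarith
          have h := mul_le_mul_of_nonneg_left hL'1 h0k
          linarith
        refine (rpow_mono step1).trans ?_
        have h8 : (0:ℝ) < 8 * Λ / (b - a) := by positivity
        have hstep : ((2:ℝ) ^ ((k₀ + s : ℤ):ℝ))⁻¹ ≤ (8 * Λ / (b - a))⁻¹ :=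
          inv_anti₀ h8 h2k₀s
        calc (2:ℝ) ^ (-((k₀ + s : ℤ):ℝ)) = ((2:ℝ) ^ ((k₀ + s : ℤ):ℝ))⁻¹ :=
              Real.rpow_neg (by norm_num) _
          _ ≤ (8 * Λ / (b - a))⁻¹ := hstep
          _ = (b - a) / (8 * Λ) := by rw [inv_div]
          _ ≤ ε := hS
      · have hTexp : (2:ℝ) ^ (-((k - s : ℤ):ℝ) * (L:ℝ)) ≤ δ i := (hT i).2.2 _ hTi
        have hsL : 2 * Λ ≤ (2:ℝ) ^ ((s:ℝ) * (L:ℝ)) := by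
          refine h2s.trans (rpow_mono ?_)
          have hs0' : (0:ℝ) ≤ (s:ℝ) := by exact_mod_cast hs0
          have hL1 : (1:ℝ) ≤ (L:ℝ) := by exact_mod_cast hLpos
          have h := mul_le_mul_of_nonneg_left hL1 hs0'
          linarith
        have hfinal : (2:ℝ) ^ (-(k:ℝ) * (L:ℝ)) ≤ ε := by
          have hsplit : (2:ℝ) ^ (-(k:ℝ) * (L:ℝ))
              = (2:ℝ) ^ (-((k - s : ℤ):ℝ) * (L:ℝ)) * ((2:ℝ) ^ ((s:ℝ) * (L:ℝ)))⁻¹ := by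
            rw [← Real.rpow_neg (by norm_num : (0:ℝ) ≤ 2), ← Real.rpow_add two_pos]
            congr 1
            push_cast
            ring
          rw [hsplit]
          have h2ΛL : ((2:ℝ) ^ ((s:ℝ) * (L:ℝ)))⁻¹ ≤ (2 * Λ)⁻¹ :=
            inv_anti₀ (by positivity) hsL
          calc (2:ℝ) ^ (-((k - s : ℤ):ℝ) * (L:ℝ)) * ((2:ℝ) ^ ((s:ℝ) * (L:ℝ)))⁻¹
              ≤ (2 * Λ * ε) * (2 * Λ)⁻¹ := by
                refine mul_le_mul (hTexp.trans hδi) h2ΛL (by positivity) (by positivity)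
            _ = ε := by field_simp
        refine (rpow_mono ?_).trans hfinal
        have hLL' : (L:ℝ) ≤ ((m * L + S.ncard + 1 : ℕ):ℝ) := by exact_mod_cast hL'L
        have h0k : (0:ℝ) ≤ (k:ℝ) := by linarith
        have h := mul_le_mul_of_nonneg_left hLL' h0k
        linarith
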